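/- Let γ > 0 and let φ : [0,∞) → ℝ be strictly increasing, convex, and differentiable. Let p, q be probability densities with 0 < ‖p‖_{1+γ} < ∞ and ‖q‖_{1+γ} < ∞. Then the norm-based Bregman density power divergence D^{NB}_{φ,γ}(q,p) = (φ(‖q‖_{1+γ}) − φ(‖p‖_{1+γ}))/γ − φ'(‖p‖_{1+γ})·(⟨q p^γ⟩ − ⟨p^{1+γ}⟩)/(γ·‖p‖_{1+γ}^γ) satisfies D^{NB}_{φ,γ}(q,p) ≥ 0, and D^{NB}_{φ,γ}(q,p) = 0 if and only if q = p ν-almost everywhere. -/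

import Mathlib

open MeasureTheory Filter Real Topology Set

/-- A probability density w.r.t. a measure `ν`: measurable, nonnegative, integrating to 1. -/
def IsProbDensity {X : Type*} [MeasurableSpace X] (ν : Measure X) (p : X → ℝ) : Prop :=
  Measurable p ∧ (∀ x, 0 ≤ p x) ∧ ∫ x, p x ∂ν = 1

/-- `⟨f^{1+γ}⟩ = ∫ f(x)^{1+γ} dν`. -/
noncomputable def powInt {X : Type*} [MeasurableSpace X] (ν : Measure X) (γ : ℝ) (p : X → ℝ) : ℝ :=
  ∫ x, p x ^ (1 + γ) ∂ν

/-- `⟨q p^γ⟩ = ∫ q(x) p(x)^γ dν`. -/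
noncomputable def crossInt {X : Type*} [MeasurableSpace X] (ν : Measure X) (γ : ℝ)
    (q p : X → ℝ) : ℝ :=
  ∫ x, q x * p x ^ γ ∂ν

/-- `‖f‖_{1+γ} = ⟨f^{1+γ}⟩^{1/(1+γ)}`. -/
noncomputable def lnorm {X : Type*} [MeasurableSpace X] (ν : Measure X) (γ : ℝ) (p : X → ℝ) : ℝ :=
  (powInt ν γ p) ^ (1 / (1 + γ))

/-- Strict Young inequality: if `a^r ≠ b^s` then Young's inequality is strict. -/
private lemma young_strict {a b r s : ℝ} (ha : 0 ≤ a) (hb : 0 ≤ b)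
    (hrs : Real.HolderConjugate r s) (hne : a ^ r ≠ b ^ s) :
    a * b < a ^ r / r + b ^ s / s := by
  have hr := hrs.pos
  have hs := hrs.symm.pos
  rcases ha.eq_or_lt with rfl | hapos
  · rw [Real.zero_rpow hr.ne'] at hne ⊢
    have hbpos : 0 < b ^ s := lt_of_le_of_ne (Real.rpow_nonneg hb s) hne
    rw [zero_mul, zero_div, zero_add]
    exact div_pos hbpos hs
  · rcases hb.eq_or_lt with rfl | hbpos
    · rw [Real.zero_rpow hs.ne'] at hne ⊢
      rw [mul_zero, zero_div, add_zero]
      exact div_pos (Real.rpow_pos_of_pos hapos r) hr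
    · have hu : 0 < a ^ r := Real.rpow_pos_of_pos hapos r
      have hv : 0 < b ^ s := Real.rpow_pos_of_pos hbpos s
      have key := strictConcaveOn_log_Ioi.2 (Set.mem_Ioi.2 hu) (Set.mem_Ioi.2 hv) hne
        (by positivity : (0:ℝ) < r⁻¹) (by positivity : (0:ℝ) < s⁻¹) hrs.inv_add_inv_eq_one
      simp only [smul_eq_mul] at key
      have hlog : r⁻¹ * Real.log (a ^ r) + s⁻¹ * Real.log (b ^ s) = Real.log (a * b) := by
        rw [Real.log_rpow hapos, Real.log_rpow hbpos, Real.log_mul hapos.ne' hbpos.ne',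
          inv_mul_cancel_left₀ hr.ne', inv_mul_cancel_left₀ hs.ne']
      rw [hlog] at key
      have h2 : a * b < r⁻¹ * a ^ r + s⁻¹ * b ^ s := by
        have h3 := Real.exp_lt_exp.2 key
        rwa [Real.exp_log (by positivity), Real.exp_log (by positivity)] at h3
      rw [div_eq_inv_mul, div_eq_inv_mul]
      exact h2

/-- Rewriting the terms of Young's inequality applied to `u/Nu` and `(v/Nv)^γ`. -/
private lemma young_terms {γ u v Nu Nv : ℝ} (hγ : 0 < γ) (hu : 0 ≤ u) (hv : 0 ≤ v)
    (hNu : 0 < Nu) (hNv : 0 < Nv) :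
    (u / Nu) * ((v / Nv) ^ γ) = u * v ^ γ / (Nu * Nv ^ γ) ∧
    (u / Nu) ^ (1 + γ) / (1 + γ) + ((v / Nv) ^ γ) ^ ((1 + γ) / γ) / ((1 + γ) / γ)
      = u ^ (1 + γ) / ((1 + γ) * Nu ^ (1 + γ)) + γ * v ^ (1 + γ) / ((1 + γ) * Nv ^ (1 + γ)) ∧
    ((v / Nv) ^ γ) ^ ((1 + γ) / γ) = (v / Nv) ^ (1 + γ) := by
  have h1γ : (0:ℝ) < 1 + γ := by linarith
  have e3 : ((v / Nv) ^ γ) ^ ((1 + γ) / γ) = (v / Nv) ^ (1 + γ) := by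
    rw [← Real.rpow_mul (div_nonneg hv hNv.le),
      show γ * ((1 + γ) / γ) = 1 + γ by field_simp]
  refine ⟨?_, ?_, e3⟩
  · rw [Real.div_rpow hv hNv.le, div_mul_div_comm]
  · rw [e3, Real.div_rpow hu hNu.le, Real.div_rpow hv hNv.le]
    have hNu' := (Real.rpow_pos_of_pos hNu (1 + γ)).ne'
    have hNv' := (Real.rpow_pos_of_pos hNv (1 + γ)).ne'
    field_simp

private lemma conj_exp {γ : ℝ} (hγ : 0 < γ) : Real.HolderConjugate (1 + γ) ((1 + γ) / γ) := by
  rw [Real.holderConjugate_iff]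
  constructor
  · linarith
  · rw [inv_div]
    have : (1:ℝ) + γ ≠ 0 := by linarith
    field_simp

/-- Young's inequality in normalized-density form, non-strict. -/
private lemma young_div_le {γ u v Nu Nv : ℝ} (hγ : 0 < γ) (hu : 0 ≤ u) (hv : 0 ≤ v)
    (hNu : 0 < Nu) (hNv : 0 < Nv) :
    u * v ^ γ / (Nu * Nv ^ γ)
      ≤ u ^ (1 + γ) / ((1 + γ) * Nu ^ (1 + γ)) + γ * v ^ (1 + γ) / ((1 + γ) * Nv ^ (1 + γ)) := by
  obtain ⟨e1, e2, -⟩ := young_terms hγ hu hv hNu hNv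
  have key := Real.young_inequality_of_nonneg (div_nonneg hu hNu.le)
    (Real.rpow_nonneg (div_nonneg hv hNv.le) γ) (conj_exp hγ)
  rw [e1, e2] at key
  exact key

/-- Young's inequality in normalized-density form, strict when `u/Nu ≠ v/Nv`. -/
private lemma young_div_lt {γ u v Nu Nv : ℝ} (hγ : 0 < γ) (hu : 0 ≤ u) (hv : 0 ≤ v)
    (hNu : 0 < Nu) (hNv : 0 < Nv) (hne : u / Nu ≠ v / Nv) :
    u * v ^ γ / (Nu * Nv ^ γ)
      < u ^ (1 + γ) / ((1 + γ) * Nu ^ (1 + γ)) + γ * v ^ (1 + γ) / ((1 + γ) * Nv ^ (1 + γ)) := by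
  have h1γ : (0:ℝ) < 1 + γ := by linarith
  obtain ⟨e1, e2, e3⟩ := young_terms hγ hu hv hNu hNv
  have hne' : (u / Nu) ^ (1 + γ) ≠ ((v / Nv) ^ γ) ^ ((1 + γ) / γ) := by
    rw [e3]
    intro h
    apply hne
    have h2 := congrArg (fun z : ℝ => z ^ (1 + γ)⁻¹) h
    simpa [Real.rpow_rpow_inv (div_nonneg hu hNu.le) h1γ.ne',
      Real.rpow_rpow_inv (div_nonneg hv hNv.le) h1γ.ne'] using h2
  have key := young_strict (div_nonneg hu hNu.le)
    (Real.rpow_nonneg (div_nonneg hv hNv.le) γ) (conj_exp hγ) hne'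
  rw [e1, e2] at key
  exact key

/-- Tangent line inequality for a convex differentiable function on `[0, ∞)`. -/
private lemma tangent_le {φ : ℝ → ℝ} (hconv : ConvexOn ℝ (Set.Ici 0) φ)
    (hdiff : Differentiable ℝ φ) {x y : ℝ} (hx : 0 < x) (hy : 0 ≤ y) :
    φ x + deriv φ x * (y - x) ≤ φ y := by
  rcases lt_trichotomy x y with h | rfl | h
  · have h1 := hconv.deriv_le_slope (Set.mem_Ici.2 hx.le) (Set.mem_Ici.2 hy) h (hdiff x)
    rw [slope_def_field, le_div_iff₀ (sub_pos.2 h)] at h1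
    linarith
  · simp
  · have h1 := hconv.slope_le_deriv (Set.mem_Ici.2 hy) (Set.mem_Ici.2 hx.le) h (hdiff x)
    rw [slope_def_field, div_le_iff₀ (sub_pos.2 h)] at h1
    have h2 : deriv φ x * (y - x) = -(deriv φ x * (x - y)) := by ring
    linarith

/-- Hölder's inequality with equality characterization for probability densities. -/
private lemma holder_eq {X : Type*} [MeasurableSpace X] (ν : Measure X)
    {γ : ℝ} (hγ : 0 < γ) {p q : X → ℝ}
    (hp0 : ∀ x, 0 ≤ p x) (hq0 : ∀ x, 0 ≤ q x)
    (hp1 : ∫ x, p x ∂ν = 1) (hq1 : ∫ x, q x ∂ν = 1)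
    (hPpos : 0 < powInt ν γ p) (hQpos : 0 < powInt ν γ q)
    (hpI : Integrable (fun x => p x ^ (1 + γ)) ν)
    (hqI : Integrable (fun x => q x ^ (1 + γ)) ν)
    (hqpI : Integrable (fun x => q x * p x ^ γ) ν) :
    crossInt ν γ q p ≤ lnorm ν γ q * lnorm ν γ p ^ γ ∧
      (crossInt ν γ q p = lnorm ν γ q * lnorm ν γ p ^ γ → q =ᵐ[ν] p) := by
  have h1γ : (0:ℝ) < 1 + γ := by linarith
  set Np := lnorm ν γ p with hNpd
  set Nq := lnorm ν γ q with hNqd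
  have hNp : 0 < Np := Real.rpow_pos_of_pos hPpos _
  have hNq : 0 < Nq := Real.rpow_pos_of_pos hQpos _
  have hNppow : Np ^ (1 + γ) = powInt ν γ p := by
    rw [hNpd]
    simp only [lnorm]
    rw [← Real.rpow_mul hPpos.le, one_div_mul_cancel h1γ.ne', Real.rpow_one]
  have hNqpow : Nq ^ (1 + γ) = powInt ν γ q := by
    rw [hNqd]
    simp only [lnorm]
    rw [← Real.rpow_mul hQpos.le, one_div_mul_cancel h1γ.ne', Real.rpow_one]
  have hNpγ : 0 < Np ^ γ := Real.rpow_pos_of_pos hNp γ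
  -- the pointwise Young gap function
  set g : X → ℝ := fun x =>
    q x ^ (1 + γ) / ((1 + γ) * Nq ^ (1 + γ)) + γ * p x ^ (1 + γ) / ((1 + γ) * Np ^ (1 + γ))
      - q x * p x ^ γ / (Nq * Np ^ γ) with hg
  have hg_nonneg : ∀ x, 0 ≤ g x := fun x => by
    have := young_div_le hγ (hq0 x) (hp0 x) hNq hNp
    simp only [hg]
    linarith
  have hI1 : Integrable (fun x => q x ^ (1 + γ) / ((1 + γ) * Nq ^ (1 + γ))) ν :=
    hqI.div_const _
  have hI2 : Integrable (fun x => γ * p x ^ (1 + γ) / ((1 + γ) * Np ^ (1 + γ))) ν :=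
    (hpI.const_mul γ).div_const _
  have hI3 : Integrable (fun x => q x * p x ^ γ / (Nq * Np ^ γ)) ν := hqpI.div_const _
  have hI12 : Integrable (fun x => q x ^ (1 + γ) / ((1 + γ) * Nq ^ (1 + γ))
      + γ * p x ^ (1 + γ) / ((1 + γ) * Np ^ (1 + γ))) ν := hI1.add hI2
  have hgI : Integrable g ν := hI12.sub hI3
  have hint : ∫ x, g x ∂ν = 1 - crossInt ν γ q p / (Nq * Np ^ γ) := by
    simp only [hg]
    rw [integral_sub hI12 hI3, integral_add hI1 hI2, integral_div, integral_div,
      integral_const_mul, integral_div]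
    have e1 : ∫ x, q x ^ (1 + γ) ∂ν = Nq ^ (1 + γ) := by rw [hNqpow]; rfl
    have e2 : ∫ x, p x ^ (1 + γ) ∂ν = Np ^ (1 + γ) := by rw [hNppow]; rfl
    have e3 : (∫ x, q x * p x ^ γ ∂ν) = crossInt ν γ q p := rfl
    rw [e1, e2, e3]
    have h1 := (Real.rpow_pos_of_pos hNq (1 + γ)).ne'
    have h2 := (Real.rpow_pos_of_pos hNp (1 + γ)).ne'
    field_simp
  have hle : crossInt ν γ q p ≤ Nq * Np ^ γ := by
    have h0 : 0 ≤ ∫ x, g x ∂ν := integral_nonneg hg_nonneg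
    rw [hint] at h0
    have hpos : 0 < Nq * Np ^ γ := mul_pos hNq hNpγ
    rw [sub_nonneg, div_le_one hpos] at h0
    exact h0
  refine ⟨hle, fun heq => ?_⟩
  -- equality case
  have hint0 : ∫ x, g x ∂ν = 0 := by
    rw [hint, heq, div_self (mul_pos hNq hNpγ).ne', sub_self]
  have hg0 : g =ᵐ[ν] 0 :=
    (integral_eq_zero_iff_of_nonneg_ae (Eventually.of_forall hg_nonneg) hgI).1 hint0
  have hqp : q =ᵐ[ν] fun x => Nq / Np * p x := by
    filter_upwards [hg0] with x hx
    have hx0 : g x = 0 := hx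
    have hratio : q x / Nq = p x / Np := by
      by_contra hne
      have := young_div_lt hγ (hq0 x) (hp0 x) hNq hNp hne
      simp only [hg] at hx0
      linarith
    have : q x = Nq / Np * p x := by
      field_simp at hratio ⊢
      linarith [hratio]
    exact this
  have hc1 : Nq / Np = 1 := by
    have h1 : ∫ x, q x ∂ν = ∫ x, Nq / Np * p x ∂ν := integral_congr_ae hqp
    rw [hq1, integral_const_mul, hp1, mul_one] at h1
    exact h1.symm
  filter_upwards [hqp] with x hx
  rw [hx, hc1, one_mul]

theorem nbdpd_nonneg_eq_zero_iff {X : Type*} [MeasurableSpace X] (ν : Measure X) [SigmaFinite ν]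
    (γ : ℝ) (hγ : 0 < γ)
    (φ : ℝ → ℝ) (hφmono : StrictMonoOn φ (Set.Ici 0)) (hφconv : ConvexOn ℝ (Set.Ici 0) φ)
    (hφdiff : Differentiable ℝ φ)
    (p q : X → ℝ) (hp : IsProbDensity ν p) (hq : IsProbDensity ν q)
    (hppos : 0 < powInt ν γ p)
    (hpI : Integrable (fun x => p x ^ (1 + γ)) ν)
    (hqI : Integrable (fun x => q x ^ (1 + γ)) ν)
    (hqpI : Integrable (fun x => q x * p x ^ γ) ν) :
    let D := (φ (lnorm ν γ q) - φ (lnorm ν γ p)) / γ -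
      deriv φ (lnorm ν γ p) * (crossInt ν γ q p - powInt ν γ p) / (γ * lnorm ν γ p ^ γ)
    0 ≤ D ∧ (D = 0 ↔ q =ᵐ[ν] p) := by
  obtain ⟨hpm, hp0, hp1⟩ := hp
  obtain ⟨hqm, hq0, hq1⟩ := hq
  have h1γ : (0:ℝ) < 1 + γ := by linarith
  have hQpos : 0 < powInt ν γ q := by
    rcases (integral_nonneg fun x => Real.rpow_nonneg (hq0 x) (1 + γ) :
        (0:ℝ) ≤ powInt ν γ q).lt_or_eq with h | h
    · exact h
    · exfalso
      have h0 := (integral_eq_zero_iff_of_nonneg_ae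
        (Eventually.of_forall fun x => Real.rpow_nonneg (hq0 x) (1 + γ)) hqI).1 h.symm
      have hq0' : q =ᵐ[ν] 0 := by
        filter_upwards [h0] with x hx
        have hx' : q x ^ (1 + γ) = 0 := hx
        exact (Real.rpow_eq_zero (hq0 x) h1γ.ne').1 hx'
      rw [integral_congr_ae hq0'] at hq1
      simp at hq1
  obtain ⟨hH1, hH2⟩ := holder_eq ν hγ hp0 hq0 hp1 hq1 hppos hQpos hpI hqI hqpI
  intro D
  have hD : D = (φ (lnorm ν γ q) - φ (lnorm ν γ p)) / γ -
      deriv φ (lnorm ν γ p) * (crossInt ν γ q p - powInt ν γ p) / (γ * lnorm ν γ p ^ γ) := rfl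
  set P := powInt ν γ p with hPd
  set A := crossInt ν γ q p with hAd
  set Np := lnorm ν γ p with hNpd
  set Nq := lnorm ν γ q with hNqd
  set c := deriv φ Np with hcd
  have hNp : 0 < Np := Real.rpow_pos_of_pos hppos _
  have hNq : 0 < Nq := Real.rpow_pos_of_pos hQpos _
  have hNpγ : 0 < Np ^ γ := Real.rpow_pos_of_pos hNp γ
  have hNppow : Np ^ (1 + γ) = P := by
    rw [hNpd]
    simp only [lnorm]
    rw [← hPd, ← Real.rpow_mul hppos.le, one_div_mul_cancel h1γ.ne', Real.rpow_one]
  have hPsplit : P = Np * Np ^ γ := by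
    rw [← hNppow, Real.rpow_add' hNp.le h1γ.ne', Real.rpow_one]
  -- positivity of the derivative
  have hc_pos : 0 < c := by
    by_contra h
    push_neg at h
    have htan := tangent_le hφconv hφdiff hNp (le_refl (0:ℝ))
    have hlt := hφmono (Set.mem_Ici.2 (le_refl (0:ℝ))) (Set.mem_Ici.2 hNp.le) hNp
    rw [← hcd] at htan
    nlinarith [mul_nonneg (neg_nonneg.2 h) hNp.le]
  -- Bregman term nonneg
  have hB : 0 ≤ φ Nq - φ Np - c * (Nq - Np) := by
    have htan := tangent_le hφconv hφdiff hNp hNq.le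
    rw [← hcd] at htan
    linarith
  have hE : A / Np ^ γ ≤ Nq := by
    rw [div_le_iff₀ hNpγ]
    exact hH1
  have hDγ : γ * D = (φ Nq - φ Np - c * (Nq - Np)) + c * (Nq - A / Np ^ γ) := by
    rw [hD, hPsplit]
    field_simp
    ring
  have hEc : 0 ≤ c * (Nq - A / Np ^ γ) := mul_nonneg hc_pos.le (sub_nonneg.2 hE)
  have hD_nonneg : 0 ≤ D := by
    have h0 : 0 ≤ γ * D := by rw [hDγ]; linarith
    exact nonneg_of_mul_nonneg_right h0 hγ
  refine ⟨hD_nonneg, ?_, ?_⟩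
  · intro hD0
    have h0 : (φ Nq - φ Np - c * (Nq - Np)) + c * (Nq - A / Np ^ γ) = 0 := by
      rw [← hDγ, hD0, mul_zero]
    have hE0 : c * (Nq - A / Np ^ γ) = 0 := le_antisymm (by linarith) hEc
    have hA0 : A = Nq * Np ^ γ := by
      have : Nq - A / Np ^ γ = 0 := by
        rcases mul_eq_zero.1 hE0 with h | h
        · exact absurd h hc_pos.ne'
        · exact h
      have hdiv : A / Np ^ γ = Nq := by linarith
      rw [← hdiv]
      field_simp
    exact hH2 hA0
  · intro hqp
    have hQP : powInt ν γ q = powInt ν γ p := by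
      simp only [powInt]
      refine integral_congr_ae ?_
      filter_upwards [hqp] with x hx
      rw [hx]
    have hNqNp : Nq = Np := by
      rw [hNqd, hNpd]
      simp only [lnorm]
      rw [hQP]
    have hAP : A = P := by
      rw [hAd, hPd]
      simp only [crossInt, powInt]
      refine integral_congr_ae ?_
      filter_upwards [hqp] with x hx
      rw [hx, Real.rpow_add' (hp0 x) h1γ.ne', Real.rpow_one]
    rw [hD, hNqNp, hAP, sub_self, sub_self, zero_div, mul_zero, zero_div, sub_zero]
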